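/- arXiv:2211.08510 — 2 statements merged into one kernel-verified Lean document; each statement's English description precedes it below -/
import Mathlib

section
/- Let k be a field of characteristic 0 and r ≥ 1. The set of products p₁^{ρ₁}···p_r^{ρ_r} · z₁^{a₁}···z_r^{a_r}, where p_j is the j-th Newton power sum in r variables, 0 ≤ a_i < i, and Σ_i i·ρ_i + Σ_i a_i = r, forms a basis of the vector space of homogeneous polynomials of degree r in k[z₁,…,z_r]. -/
open MvPolynomial Finset

namespace Stmt4

variable (K : Type*) [Field K] (n : ℕ)

/-- the finset of the first `m` variables -/
def lows (m : ℕ) : Finset (Fin n) := Finset.univ.filter (fun i => (i : ℕ) < m)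

/-- elementary symmetric polynomial of degree `t` in the first `m` variables -/
noncomputable def E (m t : ℕ) : MvPolynomial (Fin n) K :=
  ∑ S ∈ (lows n m).powersetCard t, ∏ i ∈ S, X i

lemma lows_zero : lows n 0 = ∅ := by simp [lows]

lemma lows_succ {m : ℕ} (h : m < n) : lows n (m + 1) = insert ⟨m, h⟩ (lows n m) := by
  ext i
  simp only [lows, mem_filter, mem_univ, true_and, mem_insert, Fin.ext_iff]
  omega

lemma not_mem_lows {m : ℕ} (h : m < n) : (⟨m, h⟩ : Fin n) ∉ lows n m := by
  simp [lows]

lemma lows_univ : lows n n = Finset.univ := by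
  ext i; simp [lows, i.isLt]

lemma card_lows {m : ℕ} (h : m ≤ n) : (lows n m).card = m := by
  induction m with
  | zero => simp [lows_zero]
  | succ k ih =>
    rw [lows_succ n (by omega), card_insert_of_notMem (not_mem_lows n _), ih (by omega)]

lemma E_zero (m : ℕ) : E K n m 0 = 1 := by
  simp [E]

lemma E_eq_zero {m t : ℕ} (h : m ≤ n) (ht : m < t) : E K n m t = 0 := by
  rw [E, powersetCard_eq_empty.2 (by rw [card_lows n h]; omega), sum_empty]

lemma E_succ {m : ℕ} (h : m < n) (t : ℕ) :
    E K n (m + 1) (t + 1) = E K n m (t + 1) + E K n m t * X ⟨m, h⟩ := by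
  rw [E, lows_succ n h, powersetCard_succ_insert (not_mem_lows n h), sum_union, sum_image]
  · congr 1
    rw [E, Finset.sum_mul]
    refine Finset.sum_congr rfl fun S hS => ?_
    rw [mem_powersetCard] at hS
    rw [prod_insert fun hx => not_mem_lows n h (hS.1 hx), mul_comm]
  · intro S hS T hT hST
    replace hS : S ⊆ lows n m ∧ S.card = t := Finset.mem_powersetCard.1 hS
    replace hT : T ⊆ lows n m ∧ T.card = t := Finset.mem_powersetCard.1 hT
    have hxS : (⟨m, h⟩ : Fin n) ∉ S := fun hx => not_mem_lows n h (hS.1 hx)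
    have hxT : (⟨m, h⟩ : Fin n) ∉ T := fun hx => not_mem_lows n h (hT.1 hx)
    rw [← erase_insert hxS, ← erase_insert hxT, hST]
  · rw [Finset.disjoint_left]
    rintro S hS hS'
    rw [mem_powersetCard] at hS
    rw [Finset.mem_image] at hS'
    obtain ⟨T, hT, rfl⟩ := hS'
    exact not_mem_lows n h (hS.1 (mem_insert_self _ _))


lemma X_pow_eq {m : ℕ} (h : m < n) :
    (X ⟨m, h⟩ : MvPolynomial (Fin n) K) ^ (m + 1) =
      ∑ t ∈ range (m + 1), (-1 : MvPolynomial (Fin n) K) ^ t *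
        (E K n (m + 1) (t + 1) * X ⟨m, h⟩ ^ (m - t)) := by
  set A : ℕ → MvPolynomial (Fin n) K :=
    fun t => (-1) ^ t * (E K n m t * X ⟨m, h⟩ ^ (m + 1 - t)) with hA
  have key : ∀ t ∈ range (m + 1),
      (-1 : MvPolynomial (Fin n) K) ^ t * (E K n (m + 1) (t + 1) * X ⟨m, h⟩ ^ (m - t))
        = A t - A (t + 1) := by
    intro t ht
    rw [mem_range] at ht
    have h1 : m + 1 - (t + 1) = m - t := by omega
    have h2 : m + 1 - t = (m - t) + 1 := by omega
    rw [E_succ K n h t, hA]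
    simp only [h1, h2, pow_succ]
    ring
  rw [Finset.sum_congr rfl key, Finset.sum_range_sub' A (m + 1), hA]
  simp [E_zero, E_eq_zero K n h.le (Nat.lt_succ_self m)]


lemma span_mul_mem {A : Type*} [CommRing A] [Algebra K A] {S : Set A}
    (hS : ∀ x ∈ S, ∀ y ∈ S, x * y ∈ S) {x y : A}
    (hx : x ∈ Submodule.span K S) (hy : y ∈ Submodule.span K S) :
    x * y ∈ Submodule.span K S := by
  have h := Submodule.mul_mem_mul hx hy
  rw [Submodule.span_mul_span] at h
  exact Submodule.span_le.2
    (Set.mul_subset_iff.2 fun a ha b hb => Submodule.subset_span (hS a ha b hb)) h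

/-- generating set: products of elementary symmetrics in the first `m` variables times
"Artin monomials" in the first `m` variables -/
def Gset (m : ℕ) : Set (MvPolynomial (Fin n) K) :=
  {g | ∃ ρ a : Fin n → ℕ, (∀ i : Fin n, a i ≤ (i : ℕ)) ∧ (∀ i : Fin n, m ≤ (i : ℕ) → a i = 0) ∧
    g = (∏ t : Fin n, E K n m ((t : ℕ) + 1) ^ ρ t) * ∏ i : Fin n, X i ^ a i}

theorem main (m : ℕ) : m ≤ n →
    ∀ f ∈ supported K {i : Fin n | (i : ℕ) < m}, f ∈ Submodule.span K (Gset K n m) := by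
  induction m with
  | zero =>
    intro _ f hf
    have h0 : {i : Fin n | (i : ℕ) < 0} = (∅ : Set (Fin n)) := by ext i; simp
    rw [h0, supported_empty, Algebra.mem_bot] at hf
    obtain ⟨c, rfl⟩ := hf
    have h1 : (1 : MvPolynomial (Fin n) K) ∈ Gset K n 0 := ⟨0, 0, by simp, by simp, by simp⟩
    rw [Algebra.algebraMap_eq_smul_one]
    exact Submodule.smul_mem _ _ (Submodule.subset_span h1)
  | succ m IH =>
    intro hm
    have hm' : m < n := hm
    set xm : MvPolynomial (Fin n) K := X ⟨m, hm'⟩ with hxm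
    -- the span of E(m+1)-monomials times powers of xm
    set S0 : Set (MvPolynomial (Fin n) K) :=
      {g | ∃ (μ : Fin n → ℕ) (k : ℕ),
        g = (∏ t : Fin n, E K n (m + 1) ((t : ℕ) + 1) ^ μ t) * xm ^ k} with hS0
    have hmul0 : ∀ x ∈ S0, ∀ y ∈ S0, x * y ∈ S0 := by
      rintro _ ⟨μ1, k1, rfl⟩ _ ⟨μ2, k2, rfl⟩
      refine ⟨μ1 + μ2, k1 + k2, ?_⟩
      have hsp : (∏ t : Fin n, E K n (m + 1) ((t : ℕ) + 1) ^ (μ1 + μ2) t)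
          = (∏ t : Fin n, E K n (m + 1) ((t : ℕ) + 1) ^ μ1 t) *
            ∏ t : Fin n, E K n (m + 1) ((t : ℕ) + 1) ^ μ2 t := by
        rw [← Finset.prod_mul_distrib]
        exact Finset.prod_congr rfl fun t _ => by rw [Pi.add_apply, pow_add]
      rw [hsp, pow_add]
      ring
    have h10 : (1 : MvPolynomial (Fin n) K) ∈ S0 := ⟨0, 0, by simp⟩
    have hsingle : ∀ (s : ℕ) (hs : s < n),
        (∏ t : Fin n, E K n (m + 1) ((t : ℕ) + 1) ^ (if (t : ℕ) = s then 1 else 0))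
          = E K n (m + 1) (s + 1) := by
      intro s hs
      rw [Finset.prod_eq_single (⟨s, hs⟩ : Fin n)]
      · simp
      · intro b _ hb
        rw [if_neg (by simpa [Fin.ext_iff] using hb), pow_zero]
      · intro h; exact absurd (Finset.mem_univ _) h
    have hsplit : ∀ (μ : Fin n → ℕ) (s : ℕ) (hs : s < n),
        (∏ t : Fin n, E K n (m + 1) ((t : ℕ) + 1) ^ (μ t + if (t : ℕ) = s then 1 else 0))
          = (∏ t : Fin n, E K n (m + 1) ((t : ℕ) + 1) ^ μ t) * E K n (m + 1) (s + 1) := by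
      intro μ s hs
      rw [← hsingle s hs, ← Finset.prod_mul_distrib]
      exact Finset.prod_congr rfl fun t _ => pow_add _ _ _
    have hEmem : ∀ s : ℕ, E K n m s ∈ Submodule.span K S0 := by
      intro s
      induction s with
      | zero => rw [E_zero]; exact Submodule.subset_span ⟨0, 0, by simp⟩
      | succ s ihs =>
        by_cases hs : s + 1 ≤ m + 1
        · have hE : E K n m (s + 1) = E K n (m + 1) (s + 1) - E K n m s * xm := by
            rw [E_succ K n hm' s]; ring
          rw [hE]
          refine Submodule.sub_mem _ (Submodule.subset_span ?_) ?_
          · refine ⟨fun t => if (t : ℕ) = s then 1 else 0, 0, ?_⟩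
            rw [pow_zero, mul_one, hsingle s (by omega)]
          · exact span_mul_mem K hmul0 ihs (Submodule.subset_span ⟨0, 1, by simp⟩)
        · rw [E_eq_zero K n (by omega) (by omega)]
          exact Submodule.zero_mem _
    -- Phase A : supported {< m+1} is spanned by (supported {< m}) * xm ^ k
    set SA : Set (MvPolynomial (Fin n) K) :=
      {g | ∃ (f' : MvPolynomial (Fin n) K) (k : ℕ),
        f' ∈ supported K {i : Fin n | (i : ℕ) < m} ∧ g = f' * xm ^ k} with hSA
    have hmulA : ∀ g1 ∈ SA, ∀ g2 ∈ SA, g1 * g2 ∈ SA := by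
      rintro _ ⟨f1, k1, hf1, rfl⟩ _ ⟨f2, k2, hf2, rfl⟩
      exact ⟨f1 * f2, k1 + k2, mul_mem hf1 hf2, by rw [pow_add]; ring⟩
    have h1A : (1 : MvPolynomial (Fin n) K) ∈ SA := ⟨1, 0, one_mem _, by simp⟩
    have hA : ∀ f ∈ supported K {i : Fin n | (i : ℕ) < m + 1},
        f ∈ Submodule.span K SA := by
      intro f hf
      rw [supported_eq_adjoin_X] at hf
      have hle : Algebra.adjoin K (X '' {i : Fin n | (i : ℕ) < m + 1}) ≤
          (Submodule.span K SA).toSubalgebra (Submodule.subset_span h1A)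
            (fun x y hx hy => span_mul_mem K hmulA hx hy) := by
        refine Algebra.adjoin_le ?_
        rintro _ ⟨i, hi, rfl⟩
        by_cases him : (i : ℕ) < m
        · exact Submodule.subset_span ⟨X i, 0, X_mem_supported.2 him, by simp⟩
        · have hieq : i = ⟨m, hm'⟩ := by
            simp only [Set.mem_setOf_eq] at hi
            have h2 : (i : ℕ) = m := by omega
            exact Fin.ext (by simp [h2])
          exact Submodule.subset_span ⟨1, 1, one_mem _, by rw [hieq, one_mul, pow_one]⟩
      exact hle hf
    -- Phase B : SA is contained in the span of SB
    set SB : Set (MvPolynomial (Fin n) K) :=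
      {g | ∃ (μ : Fin n → ℕ) (k : ℕ) (a : Fin n → ℕ),
        (∀ i : Fin n, a i ≤ (i : ℕ)) ∧ (∀ i : Fin n, m ≤ (i : ℕ) → a i = 0) ∧
        g = (∏ t : Fin n, E K n (m + 1) ((t : ℕ) + 1) ^ μ t) * xm ^ k *
          ∏ i : Fin n, X i ^ a i} with hSB
    have hB : ∀ g ∈ SA, g ∈ Submodule.span K SB := by
      rintro _ ⟨f', k, hf', rfl⟩
      have hf'' := IH (le_of_lt hm') f' hf'
      clear hf'
      induction hf'' using Submodule.span_induction with
      | mem g hg =>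
        obtain ⟨ρ, a, ha, ham, rfl⟩ := hg
        have hprod : (∏ t : Fin n, E K n m ((t : ℕ) + 1) ^ ρ t) ∈ Submodule.span K S0 := by
          letI SAlg := (Submodule.span K S0).toSubalgebra (Submodule.subset_span h10)
            (fun x y hx hy => span_mul_mem K hmul0 hx hy)
          exact Subalgebra.prod_mem SAlg fun t _ => Subalgebra.pow_mem SAlg (hEmem _) _
        rw [show (∏ t : Fin n, E K n m ((t : ℕ) + 1) ^ ρ t) * (∏ i : Fin n, X i ^ a i) * xm ^ k
          = (∏ t : Fin n, E K n m ((t : ℕ) + 1) ^ ρ t) * ((∏ i : Fin n, X i ^ a i) * xm ^ k)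
          from by ring]
        generalize (∏ t : Fin n, E K n m ((t : ℕ) + 1) ^ ρ t) = P at hprod ⊢
        induction hprod using Submodule.span_induction with
        | mem h hh =>
          obtain ⟨μ, k', rfl⟩ := hh
          exact Submodule.subset_span ⟨μ, k' + k, a, ha, ham, by rw [pow_add]; ring⟩
        | zero => rw [zero_mul]; exact Submodule.zero_mem _
        | add u v hu hv hu' hv' => rw [add_mul]; exact Submodule.add_mem _ hu' hv'
        | smul c u hu hu' => rw [smul_mul_assoc]; exact Submodule.smul_mem _ _ hu'
      | zero => rw [zero_mul]; exact Submodule.zero_mem _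
      | add u v hu hv hu' hv' => rw [add_mul]; exact Submodule.add_mem _ hu' hv'
      | smul c u hu hu' => rw [smul_mul_assoc]; exact Submodule.smul_mem _ _ hu'
    -- Phase C : every element of SB is in the span of Gset (m+1)
    have hC : ∀ (k : ℕ) (μ a : Fin n → ℕ), (∀ i : Fin n, a i ≤ (i : ℕ)) →
        (∀ i : Fin n, m ≤ (i : ℕ) → a i = 0) →
        (∏ t : Fin n, E K n (m + 1) ((t : ℕ) + 1) ^ μ t) * xm ^ k * (∏ i : Fin n, X i ^ a i)
          ∈ Submodule.span K (Gset K n (m + 1)) := by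
      intro k
      induction k using Nat.strong_induction_on with
      | _ k ihk =>
      intro μ a ha ham
      by_cases hk : k ≤ m
      · have hX : (∏ i : Fin n, X i ^ (if (i : ℕ) = m then k else 0) :
            MvPolynomial (Fin n) K) = xm ^ k := by
          rw [Finset.prod_eq_single (⟨m, hm'⟩ : Fin n)]
          · simp [hxm]
          · intro b _ hb
            rw [if_neg (by simpa [Fin.ext_iff] using hb), pow_zero]
          · intro h; exact absurd (Finset.mem_univ _) h
        have hXsplit : (∏ i : Fin n, X i ^ (a i + if (i : ℕ) = m then k else 0) :
            MvPolynomial (Fin n) K)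
            = (∏ i : Fin n, X i ^ a i) * ∏ i : Fin n, X i ^ (if (i : ℕ) = m then k else 0) := by
          rw [← Finset.prod_mul_distrib]
          exact Finset.prod_congr rfl fun i _ => pow_add _ _ _
        refine Submodule.subset_span
          ⟨μ, (fun i => a i + if (i : ℕ) = m then k else 0), fun i => ?_, fun i hi => ?_, ?_⟩
        · dsimp only
          by_cases him : (i : ℕ) = m
          · rw [if_pos him, ham i (le_of_eq him.symm), zero_add, him]; exact hk
          · rw [if_neg him, add_zero]; exact ha i
        · dsimp only
          rw [if_neg (by omega), add_zero]
          exact ham i (by omega)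
        · dsimp only
          rw [hXsplit, hX]; ring
      · obtain ⟨k₂, rfl⟩ : ∃ k₂, k = k₂ + (m + 1) := ⟨k - (m + 1), by omega⟩
        have heq : (∏ t : Fin n, E K n (m + 1) ((t : ℕ) + 1) ^ μ t) * xm ^ (k₂ + (m + 1)) *
              (∏ i : Fin n, X i ^ a i)
            = ∑ t ∈ Finset.range (m + 1), ((-1 : K) ^ t) •
                ((∏ s : Fin n, E K n (m + 1) ((s : ℕ) + 1) ^
                    (μ s + if (s : ℕ) = t then 1 else 0)) *
                  xm ^ (k₂ + (m - t)) * (∏ i : Fin n, X i ^ a i)) := by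
          rw [pow_add, X_pow_eq K n hm', Finset.mul_sum, Finset.mul_sum, Finset.sum_mul]
          refine Finset.sum_congr rfl fun t ht => ?_
          rw [Finset.mem_range] at ht
          rw [hsplit μ t (by omega), smul_eq_C_mul, map_pow, map_neg, map_one, pow_add]
          ring
        rw [heq]
        refine Submodule.sum_mem _ fun t ht => Submodule.smul_mem _ _ ?_
        rw [Finset.mem_range] at ht
        exact ihk (k₂ + (m - t)) (by omega) _ a ha ham
    intro f hf
    refine Submodule.span_le.2 (fun g hg => ?_) (Submodule.span_le.2 hB (hA f hf))
    obtain ⟨μ, k, a, ha, ham, rfl⟩ := hg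
    exact hC k μ a ha ham


lemma E_top (t : ℕ) : E K n n t = esymm (Fin n) K t := by
  rw [E, lows_univ, esymm]

/-- products of power sums -/
def Pset : Set (MvPolynomial (Fin n) K) :=
  {g | ∃ μ : Fin n → ℕ, g = ∏ t : Fin n, psum (Fin n) K ((t : ℕ) + 1) ^ μ t}

lemma hmulP : ∀ x ∈ Pset K n, ∀ y ∈ Pset K n, x * y ∈ Pset K n := by
  rintro _ ⟨μ1, rfl⟩ _ ⟨μ2, rfl⟩
  refine ⟨μ1 + μ2, ?_⟩
  rw [← Finset.prod_mul_distrib]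
  exact Finset.prod_congr rfl fun t _ => by rw [Pi.add_apply, pow_add]

lemma one_mem_P : (1 : MvPolynomial (Fin n) K) ∈ Pset K n := ⟨0, by simp⟩

lemma psum_mem_P {j : ℕ} (h1 : 1 ≤ j) (h2 : j ≤ n) :
    psum (Fin n) K j ∈ Pset K n := by
  refine ⟨fun t => if (t : ℕ) + 1 = j then 1 else 0, ?_⟩
  rw [Finset.prod_eq_single (⟨j - 1, by omega⟩ : Fin n)]
  · dsimp only
    rw [if_pos (by omega), pow_one]
    congr 1
    omega
  · intro b _ hb
    dsimp only
    rw [if_neg, pow_zero]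
    intro hc
    exact hb (Fin.ext (by simp only [Fin.val_mk]; omega))
  · intro h; exact absurd (Finset.mem_univ _) h

variable [CharZero K]

theorem esymm_mem (k : ℕ) (hk : k ≤ n) :
    esymm (Fin n) K k ∈ Submodule.span K (Pset K n) := by
  induction k using Nat.strong_induction_on with
  | _ k ih =>
  rcases Nat.eq_zero_or_pos k with rfl | hk0
  · rw [esymm_zero]
    exact Submodule.subset_span (one_mem_P K n)
  · have hN := psum_eq_mul_esymm_sub_sum (Fin n) K k hk0
    rw [eq_sub_iff_add_eq] at hN
    have hcK : ((-1 : K) ^ (k + 1) * (k : K)) ≠ 0 := by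
      apply mul_ne_zero
      · exact pow_ne_zero _ (by norm_num)
      · exact Nat.cast_ne_zero.2 (by omega)
    have hCc : ((-1 : MvPolynomial (Fin n) K) ^ (k + 1) * (k : MvPolynomial (Fin n) K))
        = C ((-1 : K) ^ (k + 1) * (k : K)) := by
      simp [map_mul, map_pow]
    have h4 := congrArg (fun q => (((-1 : K) ^ (k + 1) * (k : K))⁻¹) • q) hN
    rw [hCc, smul_eq_C_mul, smul_eq_C_mul, ← mul_assoc, ← map_mul,
      inv_mul_cancel₀ hcK, map_one, one_mul] at h4
    rw [← h4, ← smul_eq_C_mul]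
    refine Submodule.smul_mem _ _ (Submodule.add_mem _
      (Submodule.subset_span (psum_mem_P K n hk0 hk)) (Submodule.sum_mem _ fun a ha => ?_))
    replace ha : a.1 + a.2 = k ∧ a.1 ∈ Set.Ioo 0 k := ⟨Finset.HasAntidiagonal.mem_antidiagonal.1 (Finset.mem_filter.1 ha).1, (Finset.mem_filter.1 ha).2⟩
    obtain ⟨hsum, h1a, h2a⟩ := ha
    have hterm : ((-1 : MvPolynomial (Fin n) K) ^ a.1 * esymm (Fin n) K a.1 * psum (Fin n) K a.2)
        = ((-1 : K) ^ a.1) • (esymm (Fin n) K a.1 * psum (Fin n) K a.2) := by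
      rw [smul_eq_C_mul, map_pow, map_neg, map_one, mul_assoc]
    rw [hterm]
    exact Submodule.smul_mem _ _ (span_mul_mem K (hmulP K n)
      (ih a.1 h2a (by omega)) (Submodule.subset_span (psum_mem_P K n (by omega) (by omega))))

/-- the final generating family (without the degree restriction) -/
def Fset : Set (MvPolynomial (Fin n) K) :=
  {g | ∃ ρ a : Fin n → ℕ, (∀ i : Fin n, a i ≤ (i : ℕ)) ∧
    g = (∏ t : Fin n, psum (Fin n) K ((t : ℕ) + 1) ^ ρ t) * ∏ i : Fin n, X i ^ a i}

theorem spanning (f : MvPolynomial (Fin n) K) : f ∈ Submodule.span K (Fset K n) := by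
  have h0 : f ∈ Submodule.span K (Gset K n n) := by
    refine main K n n le_rfl f ?_
    have : {i : Fin n | (i : ℕ) < n} = Set.univ := by
      ext i; simp [i.isLt]
    rw [this, supported_univ]
    trivial
  refine Submodule.span_le.2 (fun g hg => ?_) h0
  obtain ⟨ρ, a, ha, _, rfl⟩ := hg
  have hE : (∏ t : Fin n, E K n n ((t : ℕ) + 1) ^ ρ t) ∈ Submodule.span K (Pset K n) := by
    letI PA := (Submodule.span K (Pset K n)).toSubalgebra
      (Submodule.subset_span (one_mem_P K n))
      (fun x y hx hy => span_mul_mem K (hmulP K n) hx hy)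
    refine Subalgebra.prod_mem PA fun t _ => Subalgebra.pow_mem PA ?_ _
    rw [E_top]
    exact esymm_mem K n ((t : ℕ) + 1) t.isLt
  generalize (∏ t : Fin n, E K n n ((t : ℕ) + 1) ^ ρ t) = P at hE ⊢
  induction hE using Submodule.span_induction with
  | mem g hg => obtain ⟨μ, rfl⟩ := hg; exact Submodule.subset_span ⟨μ, a, ha, rfl⟩
  | zero => rw [zero_mul]; exact Submodule.zero_mem _
  | add u v hu hv hu' hv' => rw [add_mul]; exact Submodule.add_mem _ hu' hv'
  | smul c u hu hu' => rw [smul_mul_assoc]; exact Submodule.smul_mem _ _ hu'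


lemma psum_hom (j : ℕ) : (psum (Fin n) K j).IsHomogeneous j := by
  have h : psum (Fin n) K j = ∑ i : Fin n, X i ^ j := rfl
  rw [h]
  exact IsHomogeneous.sum _ _ _ fun i _ => isHomogeneous_X_pow _ _

lemma fam_hom (ρ a : Fin n → ℕ) :
    ((∏ t : Fin n, psum (Fin n) K ((t : ℕ) + 1) ^ ρ t) *
      ∏ i : Fin n, X i ^ a i).IsHomogeneous
      ((∑ t : Fin n, ((t : ℕ) + 1) * ρ t) + ∑ i : Fin n, a i) := by
  apply IsHomogeneous.mul
  · exact IsHomogeneous.prod _ _ _ fun t _ => (psum_hom K n _).pow _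
  · exact IsHomogeneous.prod _ _ _ fun i _ => isHomogeneous_X_pow _ _

variable (r : ℕ)

/-- the index type of the family -/
def Idx := {q : (Fin r → ℕ) × (Fin r → ℕ) //
    (∀ i : Fin r, q.2 i < (i : ℕ) + 1) ∧
    (∑ i : Fin r, ((i : ℕ) + 1) * q.1 i) + (∑ i : Fin r, q.2 i) = r}

/-- the family -/
noncomputable def fam (p : Idx r) : MvPolynomial (Fin r) K :=
  (∏ i : Fin r, psum (Fin r) K ((i : ℕ) + 1) ^ p.val.1 i) * ∏ i : Fin r, X i ^ p.val.2 i

theorem span_eq :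
    Submodule.span K (Set.range (fam K r)) = homogeneousSubmodule (Fin r) K r := by
  apply le_antisymm
  · rw [Submodule.span_le]
    rintro _ ⟨p, rfl⟩
    rw [SetLike.mem_coe, mem_homogeneousSubmodule]
    have h := fam_hom K r p.val.1 p.val.2
    rwa [p.prop.2] at h
  · intro f hf
    rw [mem_homogeneousSubmodule] at hf
    have h1 : f ∈ Submodule.span K (Fset K r) := spanning K r f
    have hf2 : homogeneousComponent r f = f := by
      rw [homogeneousComponent_of_mem ((mem_homogeneousSubmodule r f).2 hf), if_pos rfl]
    rw [← hf2]
    have h2 : homogeneousComponent r f ∈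
        Submodule.map (homogeneousComponent (σ := Fin r) (R := K) r)
          (Submodule.span K (Fset K r)) := ⟨f, h1, rfl⟩
    rw [Submodule.map_span] at h2
    refine Submodule.span_le.2 ?_ h2
    rintro _ ⟨g, ⟨ρ, a, ha, rfl⟩, rfl⟩
    have hhom := fam_hom K r ρ a
    rw [homogeneousComponent_of_mem ((mem_homogeneousSubmodule _ _).2 hhom)]
    by_cases hdr : r = (∑ t : Fin r, ((t : ℕ) + 1) * ρ t) + ∑ i : Fin r, a i
    · rw [if_pos hdr]
      exact Submodule.subset_span
        ⟨⟨(ρ, a), ⟨fun i => Nat.lt_succ_of_le (ha i), hdr.symm⟩⟩, rfl⟩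
    · rw [if_neg hdr]; exact Submodule.zero_mem _

/-- index of the monomial basis of the degree-`r` homogeneous component -/
def J := {d : Fin r →₀ ℕ // d.degree = r}

noncomputable def monFam (d : J r) : homogeneousSubmodule (Fin r) K r :=
  ⟨monomial d.1 1, (mem_homogeneousSubmodule _ _).2 (isHomogeneous_monomial _ d.2)⟩

lemma monFam_indep : LinearIndependent K (monFam K r) := by
  refine LinearIndependent.of_comp (homogeneousSubmodule (Fin r) K r).subtype ?_
  have h := (basisMonomials (Fin r) K).linearIndependent.comp
    (Subtype.val : J r → (Fin r →₀ ℕ)) Subtype.val_injective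
  have heq : (homogeneousSubmodule (Fin r) K r).subtype ∘ monFam K r =
      ⇑(basisMonomials (Fin r) K) ∘ (Subtype.val : J r → (Fin r →₀ ℕ)) := by
    funext d; simp [monFam, coe_basisMonomials]; rfl
  rw [heq]; exact h

lemma monFam_span : ⊤ ≤ Submodule.span K (Set.range (monFam K r)) := by
  rintro ⟨f, hf⟩ -
  have hf' : f ∈ Submodule.span K
      (Set.range fun d : J r => (monomial d.1 1 : MvPolynomial (Fin r) K)) := by
    have hsum : f = ∑ d ∈ f.support, monomial d (coeff d f) := f.as_sum
    nth_rewrite 1 [hsum]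
    refine Submodule.sum_mem _ fun d hd => ?_
    have hdeg : d.degree = r := by
      by_contra hne
      exact (mem_support_iff.1 hd) (IsHomogeneous.coeff_eq_zero hf hne)
    have hmon : monomial d (coeff d f) = (coeff d f) • (monomial d 1 : MvPolynomial (Fin r) K) := by
      rw [smul_monomial, smul_eq_mul, mul_one]
    rw [hmon]
    exact Submodule.smul_mem _ _ (Submodule.subset_span ⟨⟨d, hdeg⟩, rfl⟩)
  have himg : (Set.range fun d : J r => (monomial d.1 1 : MvPolynomial (Fin r) K))
      = (homogeneousSubmodule (Fin r) K r).subtype '' Set.range (monFam K r) := by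
    rw [← Set.range_comp]; rfl
  rw [himg, ← Submodule.map_span] at hf'
  obtain ⟨y, hy, hyx⟩ := hf'
  have hyeq : y = ⟨f, hf⟩ := Subtype.ext hyx
  rwa [← hyeq]

def Jfun := {b : Fin r → ℕ // ∑ i : Fin r, b i = r}

noncomputable instance : Fintype (Jfun r) :=
  Fintype.ofInjective
    (fun b : Jfun r => (fun i => (⟨b.1 i,
      lt_of_le_of_lt (le_of_le_of_eq (Finset.single_le_sum
        (fun j _ => Nat.zero_le (b.1 j)) (Finset.mem_univ i)) b.2)
        (Nat.lt_succ_self r)⟩ : Fin (r + 1))))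
    (fun b c h => Subtype.ext (funext fun i => by
      have h2 := congrFun h i
      simpa [Fin.ext_iff] using h2))

noncomputable instance : Fintype (Idx r) :=
  Fintype.ofInjective
    (fun q : Idx r =>
      (((fun i => (⟨q.1.1 i, by
        have h1 : ((i : ℕ) + 1) * q.1.1 i ≤ r := by
          have h2 := Finset.single_le_sum
            (f := fun j : Fin r => ((j : ℕ) + 1) * q.1.1 j)
            (fun j _ => Nat.zero_le _) (Finset.mem_univ i)
          replace h2 : ((i : ℕ) + 1) * q.1.1 i ≤ ∑ j : Fin r, ((j : ℕ) + 1) * q.1.1 j := h2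
          have h3 := q.2.2
          omega
        have h4 : q.1.1 i ≤ ((i : ℕ) + 1) * q.1.1 i :=
          Nat.le_mul_of_pos_left _ (Nat.succ_pos _)
        omega⟩ : Fin (r + 1))) : Fin r → Fin (r + 1)),
      ((fun i => (⟨q.1.2 i, by
        have h5 := q.2.1 i
        have h6 := i.isLt
        omega⟩ : Fin (r + 1))) : Fin r → Fin (r + 1))))
    (fun a b h => by
      rw [Prod.mk.injEq] at h
      refine Subtype.ext (Prod.ext (funext fun i => ?_) (funext fun i => ?_))
      · have h3 := congrFun h.1 i
        simpa [Fin.ext_iff] using h3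
      · have h3 := congrFun h.2 i
        simpa [Fin.ext_iff] using h3)

noncomputable def e1 : Idx r ≃ Jfun r where
  toFun q := ⟨fun i => ((i : ℕ) + 1) * q.1.1 i + q.1.2 i, by
    rw [Finset.sum_add_distrib]; exact q.2.2⟩
  invFun b := ⟨(fun i => b.1 i / ((i : ℕ) + 1), fun i => b.1 i % ((i : ℕ) + 1)),
    fun i => Nat.mod_lt _ (Nat.succ_pos _), by
      rw [← Finset.sum_add_distrib]
      rw [Finset.sum_congr rfl fun i (_ : i ∈ Finset.univ) => Nat.div_add_mod (b.1 i) ((i : ℕ) + 1)]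
      exact b.2⟩
  left_inv q := by
    apply Subtype.ext
    apply Prod.ext
    · funext i
      dsimp only
      rw [Nat.mul_add_div (Nat.succ_pos _), Nat.div_eq_of_lt (q.2.1 i), add_zero]
    · funext i
      dsimp only
      rw [Nat.mul_add_mod, Nat.mod_eq_of_lt (q.2.1 i)]
  right_inv b := by
    apply Subtype.ext
    funext i
    dsimp only
    exact Nat.div_add_mod _ _

lemma degree_eq_sum_univ (d : Fin r →₀ ℕ) : d.degree = ∑ i : Fin r, d i :=
  Finset.sum_subset (Finset.subset_univ _) fun i _ hi => Finsupp.notMem_support_iff.1 hi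

noncomputable def e2 : Jfun r ≃ J r where
  toFun b := ⟨Finsupp.equivFunOnFinite.symm b.1, by
    rw [degree_eq_sum_univ]
    simpa using b.2⟩
  invFun d := ⟨(d.1 : Fin r → ℕ), by rw [← degree_eq_sum_univ]; exact d.2⟩
  left_inv b := by
    apply Subtype.ext
    exact Finsupp.equivFunOnFinite.apply_symm_apply b.1
  right_inv d := by apply Subtype.ext; simp

noncomputable instance : Fintype (J r) := Fintype.ofEquiv _ (e2 r)

theorem indep : LinearIndependent K (fam K r) := by
  have hbasis : Module.Basis (J r) K (homogeneousSubmodule (Fin r) K r) :=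
    Module.Basis.mk (monFam_indep K r) (monFam_span K r)
  have hfr : Module.finrank K (homogeneousSubmodule (Fin r) K r) = Fintype.card (J r) :=
    Module.finrank_eq_card_basis hbasis
  have hmemV : ∀ p : Idx r, fam K r p ∈ homogeneousSubmodule (Fin r) K r := by
    intro p
    rw [mem_homogeneousSubmodule]
    have h := fam_hom K r p.1.1 p.1.2
    rwa [p.2.2] at h
  set famV : Idx r → homogeneousSubmodule (Fin r) K r :=
    fun p => ⟨fam K r p, hmemV p⟩ with hfamV
  have hsub : (homogeneousSubmodule (Fin r) K r).subtype ∘ famV = fam K r := rfl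
  have hspan : ⊤ ≤ Submodule.span K (Set.range famV) := by
    have hmap : Submodule.map (homogeneousSubmodule (Fin r) K r).subtype
        (Submodule.span K (Set.range famV)) =
        Submodule.map (homogeneousSubmodule (Fin r) K r).subtype ⊤ := by
      rw [Submodule.map_span, ← Set.range_comp, hsub, Submodule.map_top,
        Submodule.range_subtype]
      exact span_eq K r
    exact le_of_eq (Submodule.map_injective_of_injective
      (homogeneousSubmodule (Fin r) K r).injective_subtype hmap).symm
  have hcard : Fintype.card (Idx r) = Module.finrank K (homogeneousSubmodule (Fin r) K r) := by
    rw [hfr]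
    exact Fintype.card_congr ((e1 r).trans (e2 r))
  have hind := linearIndependent_of_top_le_span_of_card_eq_finrank hspan hcard
  have h2 := hind.map' (homogeneousSubmodule (Fin r) K r).subtype
    (Submodule.ker_subtype _)
  rwa [hsub] at h2

end Stmt4

/-- the products `p₁^{ρ₁} ⋯ p_r^{ρ_r} · z₁^{a₁} ⋯ z_r^{a_r}` with `0 ≤ a_i < i`
and `Σ_i i·ρ_i + Σ_i a_i = r` form a basis of the space of homogeneous polynomials of
degree `r` in `k[z₁,…,z_r]`.  Here `i : Fin r` stands for the index `i+1`, so `p` with index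
`i` is the power sum `p_{i+1}` and the exponent conditions read `a i ≤ i` and
`Σ (i+1)·ρ i + Σ a i = r`. -/
theorem stmt4 (K : Type*) [Field K] [CharZero K] (r : ℕ) (hr : 1 ≤ r) :
    LinearIndependent K
        (fun p : {q : (Fin r → ℕ) × (Fin r → ℕ) //
            (∀ i : Fin r, q.2 i < (i : ℕ) + 1) ∧
            (∑ i : Fin r, ((i : ℕ) + 1) * q.1 i) + (∑ i : Fin r, q.2 i) = r} =>
          (∏ i : Fin r, psum (Fin r) K ((i : ℕ) + 1) ^ p.val.1 i) *
            ∏ i : Fin r, X i ^ p.val.2 i) ∧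
      Submodule.span K
          (Set.range fun p : {q : (Fin r → ℕ) × (Fin r → ℕ) //
              (∀ i : Fin r, q.2 i < (i : ℕ) + 1) ∧
              (∑ i : Fin r, ((i : ℕ) + 1) * q.1 i) + (∑ i : Fin r, q.2 i) = r} =>
            (∏ i : Fin r, psum (Fin r) K ((i : ℕ) + 1) ^ p.val.1 i) *
              ∏ i : Fin r, X i ^ p.val.2 i) =
        homogeneousSubmodule (Fin r) K r :=
  ⟨Stmt4.indep K r, Stmt4.span_eq K r⟩
end

section
/- Let k be a field of characteristic 0 and let λ̄ = (λ₁,…,λ_r), μ̄ = (μ₁,…,μ_r) ∈ k^r. Define an action of the operators e_j (j ≥ 1) on k[z₁,…,z_r] by e_j·(z₁^{a₁}···z_r^{a_r}) = (Σ_{i=1}^r (a_i + μ_i + (j+1)λ_i)·z_i^j)·z₁^{a₁}···z_r^{a_r}. Then these operators satisfy [e_j, e_m] = (m−j)e_{j+m}, i.e., this defines an L₁-module structure on k[z₁,…,z_r]. -/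
open MvPolynomial

/-- The operator `e_j` on `T_{λ₁,μ₁} ⊗ ⋯ ⊗ T_{λ_r,μ_r} = k[z₁,…,z_r]`, acting on the
monomial `z^ā` by multiplication by `Σ_i (a_i + μ_i + (j+1)λ_i) z_i^j`, extended linearly. -/
noncomputable def tensorWittOp {K : Type*} [Field K] {r : ℕ} (lam mu : Fin r → K) (j : ℕ)
    (f : MvPolynomial (Fin r) K) : MvPolynomial (Fin r) K :=
  ∑ a ∈ f.support,
    (∑ i : Fin r, C ((a i : K) + mu i + ((j : K) + 1) * lam i) * X i ^ j) *
      monomial a (coeff a f)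

section Aux

variable {K : Type*} [Field K] {r : ℕ}

/-- single-variable piece of the operator -/
noncomputable def Eop (c : K) (i : Fin r) (j : ℕ) (f : MvPolynomial (Fin r) K) :
    MvPolynomial (Fin r) K :=
  C c * X i ^ j * f + X i ^ j * (X i * pderiv i f)

lemma Eop_add (c : K) (i : Fin r) (j : ℕ) (f g : MvPolynomial (Fin r) K) :
    Eop c i j (f + g) = Eop c i j f + Eop c i j g := by
  simp [Eop]; ring

lemma Eop_sum {α : Type*} (c : K) (i : Fin r) (j : ℕ) (s : Finset α)
    (g : α → MvPolynomial (Fin r) K) :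
    Eop c i j (∑ x ∈ s, g x) = ∑ x ∈ s, Eop c i j (g x) := by
  simp [Eop, Finset.mul_sum, map_sum, Finset.sum_add_distrib]

lemma X_mul_pderiv_monomial (i : Fin r) (a : Fin r →₀ ℕ) (c : K) :
    X i * pderiv i (monomial a c) = C (a i : K) * monomial a c := by
  rw [pderiv_monomial]
  rcases Nat.eq_zero_or_pos (a i) with h | h
  · simp [h]
  · rw [X, monomial_mul, one_mul, add_tsub_cancel_of_le (by rwa [Finsupp.single_le_iff]),
      C_mul_monomial, mul_comm]

lemma Eop_monomial (c : K) (i : Fin r) (j : ℕ) (a : Fin r →₀ ℕ) (d : K) :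
    Eop c i j (monomial a d) = C ((a i : K) + c) * X i ^ j * monomial a d := by
  rw [Eop, _root_.X_mul_pderiv_monomial]
  rw [map_add]
  ring

lemma tensorWittOp_eq (lam mu : Fin r → K) (j : ℕ) (f : MvPolynomial (Fin r) K) :
    tensorWittOp lam mu j f =
      ∑ i : Fin r, Eop (mu i + ((j : K) + 1) * lam i) i j f := by
  conv_rhs => rw [f.as_sum]
  simp only [Eop_sum]
  rw [tensorWittOp, Finset.sum_comm]
  refine Finset.sum_congr rfl fun a _ => ?_
  rw [Finset.sum_mul]
  refine Finset.sum_congr rfl fun i _ => ?_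
  rw [Eop_monomial, ← add_assoc]


lemma pderiv_pderiv_comm (i i' : Fin r) (f : MvPolynomial (Fin r) K) :
    pderiv i (pderiv i' f) = pderiv i' (pderiv i f) := by
  rcases eq_or_ne i i' with rfl | hne
  · rfl
  · induction f using MvPolynomial.induction_on' with
    | monomial a c =>
      simp only [pderiv_monomial]
      rw [tsub_right_comm]
      congr 1
      rw [Finsupp.tsub_apply, Finsupp.tsub_apply, Finsupp.single_apply,
        Finsupp.single_apply, if_neg hne, if_neg hne.symm]
      simp only [Nat.sub_zero]
      ring
    | add p q hp hq => simp [hp, hq]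

lemma comm_ne (c d : K) (i i' : Fin r) (hne : i ≠ i') (j m : ℕ)
    (f : MvPolynomial (Fin r) K) :
    Eop c i j (Eop d i' m f) = Eop d i' m (Eop c i j f) := by
  simp only [Eop, map_add, pderiv_mul, pderiv_pow, pderiv_C, pderiv_X_self,
    pderiv_X_of_ne hne, pderiv_X_of_ne hne.symm, zero_mul, mul_zero, zero_add, add_zero,
    mul_one]
  rw [pderiv_pderiv_comm i i']
  ring

lemma comm_diag (c d e : K) (i : Fin r) (J M : ℕ) (f : MvPolynomial (Fin r) K)
    (h : ((M : K) + 1) * d - ((J : K) + 1) * c = (((M : K) + 1) - ((J : K) + 1)) * e) :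
    Eop c i (J + 1) (Eop d i (M + 1) f) - Eop d i (M + 1) (Eop c i (J + 1) f) =
      (((M : K) + 1) - ((J : K) + 1)) • Eop e i (J + 1 + (M + 1)) f := by
  have h' := congrArg (MvPolynomial.C (σ := Fin r)) h
  push_cast [map_sub, map_mul, map_add, map_one] at h'
  simp only [Eop, map_add, pderiv_mul, pderiv_pow, pderiv_C, pderiv_X_self,
    zero_mul, mul_zero, zero_add, add_zero, mul_one, Nat.add_sub_cancel,
    smul_eq_C_mul, map_sub, map_one, Nat.cast_add, Nat.cast_one]
  simp only [← C_eq_coe_nat]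
  linear_combination (X i ^ (J + 1 + (M + 1)) * f) * h'

end Aux

/-- the operators `e_j` above satisfy `[e_j, e_m] = (m - j) e_{j+m}` for
`j, m ≥ 1`, i.e. they define an `L₁`-module structure on `k[z₁,…,z_r]`. -/
theorem stmt13 (K : Type*) [Field K] [CharZero K] (r : ℕ) (lam mu : Fin r → K)
    (j m : ℕ) (hj : 1 ≤ j) (hm : 1 ≤ m) (f : MvPolynomial (Fin r) K) :
    tensorWittOp lam mu j (tensorWittOp lam mu m f) -
        tensorWittOp lam mu m (tensorWittOp lam mu j f) =
      ((m : K) - (j : K)) • tensorWittOp lam mu (j + m) f := by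
  obtain ⟨J, rfl⟩ := Nat.exists_eq_add_of_le' hj
  obtain ⟨M, rfl⟩ := Nat.exists_eq_add_of_le' hm
  simp only [tensorWittOp_eq, Eop_sum]
  have hswap :
      ∑ i : Fin r, ∑ i' : Fin r,
        Eop (mu i + ((↑(M + 1) : K) + 1) * lam i) i (M + 1)
          (Eop (mu i' + ((↑(J + 1) : K) + 1) * lam i') i' (J + 1) f) =
      ∑ i : Fin r, ∑ i' : Fin r,
        Eop (mu i' + ((↑(M + 1) : K) + 1) * lam i') i' (M + 1)
          (Eop (mu i + ((↑(J + 1) : K) + 1) * lam i) i (J + 1) f) :=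
    Finset.sum_comm
  rw [hswap, ← Finset.sum_sub_distrib, Finset.smul_sum]
  refine Finset.sum_congr rfl fun i _ => ?_
  rw [← Finset.sum_sub_distrib,
    Finset.sum_eq_single i (fun i' _ hne => sub_eq_zero.mpr (comm_ne _ _ i i' hne.symm _ _ f))
      (by simp)]
  push_cast
  exact comm_diag _ _ _ i J M f (by ring)
end
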